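/- arXiv:2212.13540 — 4 statements merged into one kernel-verified Lean document; each statement's English description precedes it below -/
import Mathlib

section
/- Let S be a finite index set containing a distinguished element s0, let p : S → R be a probability vector (p(s) ≥ 0, ∑_{s∈S} p(s) = 1), and let φ : S → R^d with φ(s0) = 0. If κ > 0 satisfies p(s)p(s') ≥ κ for all s, s' ∈ S, then ∑_{s∈S} p(s)φ(s)φ(s)^T − ∑_{s,s'∈S} p(s)p(s')φ(s)φ(s')^T ⪰ κ ∑_{s∈S\{s0}} φ(s)φ(s)^T. -/
open Matrix Finset

theorem stmt2 {ι : Type*} [DecidableEq ι] (d : ℕ) (S : Finset ι) (s0 : ι) (hs0 : s0 ∈ S)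
    (p : ι → ℝ) (hp : ∀ s ∈ S, 0 ≤ p s) (hp1 : ∑ s ∈ S, p s = 1)
    (φ : ι → Fin d → ℝ) (hφ0 : φ s0 = 0)
    (κ : ℝ) (hκ : 0 < κ) (hκp : ∀ s ∈ S, ∀ s' ∈ S, κ ≤ p s * p s') :
    Matrix.PosSemidef
      (((∑ s ∈ S, p s • vecMulVec (φ s) (φ s)) -
          ∑ s ∈ S, ∑ s' ∈ S, (p s * p s') • vecMulVec (φ s) (φ s')) -
        κ • ∑ s ∈ S.erase s0, vecMulVec (φ s) (φ s)) := by
  classical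
  set w : Fin d → ℝ := ∑ s ∈ S, p s • φ s with hw
  have hB : (∑ s ∈ S, ∑ s' ∈ S, (p s * p s') • vecMulVec (φ s) (φ s')) = vecMulVec w w := by
    ext i j
    simp only [Matrix.sum_apply, Matrix.smul_apply, vecMulVec_apply, smul_eq_mul, hw,
      Finset.sum_apply, Pi.smul_apply]
    rw [Finset.sum_mul_sum]
    exact Finset.sum_congr rfl fun s _ => Finset.sum_congr rfl fun s' _ => by ring
  rw [hB]
  rw [posSemidef_iff_dotProduct_mulVec]
  constructor
  · ext i j
    simp only [conjTranspose_apply, Matrix.sub_apply, Matrix.sum_apply, Matrix.smul_apply,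
      vecMulVec_apply, smul_eq_mul, star_trivial]
    rw [Finset.sum_congr rfl (fun s _ => (by ring : p s * (φ s j * φ s i) = p s * (φ s i * φ s j))),
      Finset.sum_congr rfl (fun s _ => (mul_comm (φ s j) (φ s i))), mul_comm (w j) (w i)]
  · intro x
    have hvv : ∀ u v : Fin d → ℝ, x ⬝ᵥ (vecMulVec u v *ᵥ x) = (u ⬝ᵥ x) * (v ⬝ᵥ x) := by
      intro u v
      simp only [mulVec, dotProduct, vecMulVec_apply, Finset.mul_sum, Finset.sum_mul]
      rw [Finset.sum_comm]
      exact Finset.sum_congr rfl fun i _ => Finset.sum_congr rfl fun k _ => by ring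
    have hms : ∀ (T : Finset ι) (f : ι → Matrix (Fin d) (Fin d) ℝ),
        x ⬝ᵥ ((∑ s ∈ T, f s) *ᵥ x) = ∑ s ∈ T, x ⬝ᵥ (f s *ᵥ x) := by
      intro T f
      induction T using Finset.induction with
      | empty => simp
      | insert _ _ h ih => simp [Finset.sum_insert h, add_mulVec, dotProduct_add, ih]
    have hquad : star x ⬝ᵥ ((((∑ s ∈ S, p s • vecMulVec (φ s) (φ s)) - vecMulVec w w) -
        κ • ∑ s ∈ S.erase s0, vecMulVec (φ s) (φ s)) *ᵥ x) =
        (∑ s ∈ S, p s * (φ s ⬝ᵥ x)^2 - (w ⬝ᵥ x)^2) - κ * ∑ s ∈ S.erase s0, (φ s ⬝ᵥ x)^2 := by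
      simp only [star_trivial, sub_mulVec, dotProduct_sub, smul_mulVec, dotProduct_smul, hms,
        hvv, smul_eq_mul]
      ring_nf
    rw [hquad]
    set a : ι → ℝ := fun s => φ s ⬝ᵥ x with ha
    have ha0 : a s0 = 0 := by simp [ha, hφ0]
    have hds : ∀ (U : Finset ι), (∑ s ∈ U, p s • φ s) ⬝ᵥ x = ∑ s ∈ U, p s * a s := by
      intro U
      induction U using Finset.induction with
      | empty => simp
      | insert _ _ h ih => simp [Finset.sum_insert h, add_dotProduct, smul_dotProduct, ih, ha]
    have hwx : w ⬝ᵥ x = ∑ s ∈ S, p s * a s := by rw [hw]; exact hds S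
    set T : Finset ι := S.erase s0 with hT
    have hsub : ∀ s ∈ T, s ∈ S := fun s hs => Finset.mem_of_mem_erase hs
    have hS1 : ∑ s ∈ S, p s * a s ^ 2 = ∑ s ∈ T, p s * a s ^ 2 := by
      rw [← Finset.add_sum_erase S _ hs0, ha0]; ring_nf; rfl
    have hS2 : ∑ s ∈ S, p s * a s = ∑ s ∈ T, p s * a s := by
      rw [← Finset.add_sum_erase S _ hs0, ha0]; ring_nf; rfl
    have hP : p s0 + ∑ s ∈ T, p s = 1 := by rw [Finset.add_sum_erase S p hs0]; exact hp1
    have hCS : (∑ s ∈ T, p s * a s) ^ 2 ≤ (∑ s ∈ T, p s) * ∑ s ∈ T, p s * a s ^ 2 := by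
      refine Finset.sum_sq_le_sum_mul_sum_of_sq_eq_mul T
        (fun s hsT => hp s (hsub s hsT))
        (fun s hsT => mul_nonneg (hp s (hsub s hsT)) (sq_nonneg _))
        (fun s _ => by ring)
    have hκs : κ * ∑ s ∈ T, a s ^ 2 ≤ p s0 * ∑ s ∈ T, p s * a s ^ 2 := by
      rw [Finset.mul_sum, Finset.mul_sum]
      refine Finset.sum_le_sum fun s hsT => ?_
      have := hκp s0 hs0 s (hsub s hsT)
      calc κ * a s ^ 2 ≤ (p s0 * p s) * a s ^ 2 :=
            mul_le_mul_of_nonneg_right this (sq_nonneg _)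
        _ = p s0 * (p s * a s ^ 2) := by ring
    have hQnn : 0 ≤ ∑ s ∈ T, p s * a s ^ 2 :=
      Finset.sum_nonneg fun s hsT => mul_nonneg (hp s (hsub s hsT)) (sq_nonneg _)
    rw [hwx, hS1, hS2]
    nlinarith [hCS, hκs, hP, hQnn]
end

section
/- Let A be a d×d symmetric positive definite real matrix and let x_1, …, x_m ∈ R^d. Then det(A + ∑_{j=1}^m x_j x_j^T) ≥ det(A) · (1 + ∑_{j=1}^m ‖x_j‖²_{A^{-1}}), where ‖x‖²_{A^{-1}} = x^T A^{-1} x. -/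
open Matrix Finset

lemma aux_one_add_sum_le_prod {ι : Type*} (s : Finset ι) (f : ι → ℝ)
    (hf : ∀ i ∈ s, 0 ≤ f i) : 1 + ∑ i ∈ s, f i ≤ ∏ i ∈ s, (1 + f i) := by
  induction s using Finset.cons_induction with
  | empty => simp
  | cons a s ha ih =>
    rw [Finset.prod_cons, Finset.sum_cons]
    have hfa : 0 ≤ f a := hf a (Finset.mem_cons_self a s)
    have hs : ∀ i ∈ s, 0 ≤ f i := fun i hi => hf i (Finset.mem_cons_of_mem hi)
    have h1 : 0 ≤ ∑ i ∈ s, f i := Finset.sum_nonneg hs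
    calc 1 + (f a + ∑ i ∈ s, f i) ≤ (1 + f a) * (1 + ∑ i ∈ s, f i) := by nlinarith
    _ ≤ (1 + f a) * ∏ i ∈ s, (1 + f i) :=
        mul_le_mul_of_nonneg_left (ih hs) (by linarith)

lemma aux_vecMulVec_posSemidef {d : ℕ} (x : Fin d → ℝ) :
    (vecMulVec x x).PosSemidef := by
  rw [Matrix.posSemidef_iff_dotProduct_mulVec]
  constructor
  · ext i j
    simp [vecMulVec_apply, conjTranspose_apply, mul_comm]
  · intro y
    have : dotProduct (star y) (vecMulVec x x *ᵥ y) = (x ⬝ᵥ y) ^ 2 := by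
      simp [dotProduct, mulVec, vecMulVec_apply, Finset.mul_sum, Finset.sum_mul, sq]
      apply Finset.sum_congr rfl; intro i _
      apply Finset.sum_congr rfl; intro j _
      ring
    rw [this]
    positivity

lemma aux_det_one_add {n : ℕ} {C : Matrix (Fin n) (Fin n) ℝ}
    (hC : C.PosSemidef) : 1 + C.trace ≤ (1 + C).det := by
  have hH := hC.isHermitian
  set U : Matrix (Fin n) (Fin n) ℝ := (hH.eigenvectorUnitary : Matrix (Fin n) (Fin n) ℝ) with hU
  have hU1 : U * star U = 1 := (Matrix.mem_unitaryGroup_iff).mp hH.eigenvectorUnitary.2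
  have hU2 : star U * U = 1 := (Matrix.mem_unitaryGroup_iff').mp hH.eigenvectorUnitary.2
  have hspec : C = U * diagonal (RCLike.ofReal ∘ hH.eigenvalues) * star U :=
    hH.spectral_theorem
  have key : (1 : Matrix (Fin n) (Fin n) ℝ) + C
      = U * (1 + diagonal (RCLike.ofReal ∘ hH.eigenvalues)) * star U := by
    rw [mul_add, add_mul, mul_one, hU1, ← hspec]
  have hdet : (1 + C).det = ∏ i, (1 + hH.eigenvalues i) := by
    rw [key, Matrix.det_mul_right_comm, hU1, one_mul]
    have : (1 : Matrix (Fin n) (Fin n) ℝ) + diagonal (RCLike.ofReal ∘ hH.eigenvalues)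
        = diagonal (fun i => 1 + hH.eigenvalues i) := by
      rw [← Matrix.diagonal_one, Matrix.diagonal_add]
      rfl
    rw [this, Matrix.det_diagonal]
  have htr : C.trace = ∑ i, hH.eigenvalues i := by
    conv_lhs => rw [hspec]
    rw [Matrix.trace_mul_cycle, hU2, one_mul, Matrix.trace_diagonal]
    rfl
  rw [hdet, htr]
  exact aux_one_add_sum_le_prod Finset.univ _ (fun i _ => hC.eigenvalues_nonneg i)

lemma aux_trace_vecMulVec_mul {d : ℕ} (x : Fin d → ℝ) (B : Matrix (Fin d) (Fin d) ℝ) :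
    (vecMulVec x x * B).trace = x ⬝ᵥ B *ᵥ x := by
  simp only [Matrix.trace, Matrix.diag, Matrix.mul_apply, vecMulVec_apply,
    dotProduct, mulVec, Finset.mul_sum]
  rw [Finset.sum_comm]
  apply Finset.sum_congr rfl; intro i _
  apply Finset.sum_congr rfl; intro j _
  ring

theorem stmt4 (d m : ℕ) (A : Matrix (Fin d) (Fin d) ℝ) (hA : A.PosDef)
    (x : Fin m → Fin d → ℝ) :
    A.det * (1 + ∑ j, x j ⬝ᵥ A⁻¹ *ᵥ x j) ≤
      (A + ∑ j, vecMulVec (x j) (x j)).det := by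
  set M : Matrix (Fin d) (Fin d) ℝ := ∑ j, vecMulVec (x j) (x j) with hMdef
  have hM : M.PosSemidef := by
    rw [hMdef]
    induction (Finset.univ : Finset (Fin m)) using Finset.cons_induction with
    | empty => simpa using Matrix.PosSemidef.zero
    | cons a s ha ih =>
      rw [Finset.sum_cons]
      exact (aux_vecMulVec_posSemidef (x a)).add ih
  open scoped MatrixOrder in
  set S := CFC.sqrt M with hSdef
  open scoped MatrixOrder in
  have hSS : S * S = M := CFC.sqrt_mul_sqrt_self M hM.nonneg
  open scoped MatrixOrder in
  have hSherm : Sᴴ = S := (CFC.sqrt_nonneg M).posSemidef.isHermitian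
  have hC : (S * A⁻¹ * S).PosSemidef := by
    have := hA.inv.posSemidef.mul_mul_conjTranspose_same S
    rwa [hSherm] at this
  have hAdet : IsUnit A.det := hA.isUnit.map detMonoidHom
  have hfact : A + M = A * (1 + A⁻¹ * M) := by
    rw [mul_add, mul_one, ← mul_assoc, Matrix.mul_nonsing_inv A hAdet, one_mul]
  have hdet1 : (A + M).det = A.det * (1 + S * A⁻¹ * S).det := by
    rw [hfact, Matrix.det_mul]
    congr 1
    have : A⁻¹ * M = (A⁻¹ * S) * S := by rw [mul_assoc, hSS]
    rw [this, Matrix.det_one_add_mul_comm, ← mul_assoc]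
  have htr : (S * A⁻¹ * S).trace = ∑ j, x j ⬝ᵥ A⁻¹ *ᵥ x j := by
    rw [Matrix.trace_mul_cycle, hSS, hMdef, Finset.sum_mul, Matrix.trace_sum]
    exact Finset.sum_congr rfl fun j _ => aux_trace_vecMulVec_mul (x j) A⁻¹
  rw [hdet1]
  apply mul_le_mul_of_nonneg_left _ hA.det_pos.le
  rw [← htr]
  exact aux_det_one_add hC
end

section
/- Let S be a finite nonempty set, V : S → [0, H], φ : S → R^d, and define f(θ) = ∑_{s∈S} p(s, θ) V(s) where p(s, θ) = exp(φ(s)^T θ)/∑_{s'∈S} exp(φ(s')^T θ). Let A be a symmetric positive definite d×d matrix. Then for any θ₁, θ₂ ∈ R^d, |f(θ₁) − f(θ₂)| ≤ H · (max_{s∈S} ‖φ(s)‖_{A^{-1}}) · ‖θ₁ − θ₂‖_A. -/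
open Finset Matrix

lemma symm_dot {n : Type*} [Fintype n] {M : Matrix n n ℝ} (hM : M.IsHermitian)
    (x y : n → ℝ) : x ⬝ᵥ M *ᵥ y = y ⬝ᵥ M *ᵥ x := by
  have ht : Mᵀ = M := by simpa using hM.eq
  rw [dotProduct_mulVec, dotProduct_comm, ← mulVec_transpose, ht]

lemma cs_psd {n : Type*} [Fintype n] {M : Matrix n n ℝ} (hM : M.PosSemidef)
    (x y : n → ℝ) :
    |x ⬝ᵥ M *ᵥ y| ≤ Real.sqrt (x ⬝ᵥ M *ᵥ x) * Real.sqrt (y ⬝ᵥ M *ᵥ y) := by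
  have hnn : ∀ z : n → ℝ, 0 ≤ z ⬝ᵥ M *ᵥ z := by
    intro z; simpa using hM.dotProduct_mulVec_nonneg z
  have key : ∀ t : ℝ, 0 ≤ (x ⬝ᵥ M *ᵥ x) * (t * t) + (2 * (x ⬝ᵥ M *ᵥ y)) * t
      + y ⬝ᵥ M *ᵥ y := by
    intro t
    have := hnn (t • x + y)
    have expand : (t • x + y) ⬝ᵥ M *ᵥ (t • x + y)
        = (x ⬝ᵥ M *ᵥ x) * (t * t) + (2 * (x ⬝ᵥ M *ᵥ y)) * t + y ⬝ᵥ M *ᵥ y := by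
      simp only [mulVec_add, mulVec_smul, dotProduct_add, add_dotProduct,
        smul_dotProduct, dotProduct_smul, smul_eq_mul]
      rw [symm_dot hM.1 y x]; ring
    linarith [expand ▸ this]
  have hd := discrim_le_zero key
  rw [discrim] at hd
  have h2 : (x ⬝ᵥ M *ᵥ y) ^ 2 ≤ (x ⬝ᵥ M *ᵥ x) * (y ⬝ᵥ M *ᵥ y) := by nlinarith
  calc |x ⬝ᵥ M *ᵥ y| = Real.sqrt ((x ⬝ᵥ M *ᵥ y) ^ 2) := (Real.sqrt_sq_eq_abs _).symm
    _ ≤ Real.sqrt ((x ⬝ᵥ M *ᵥ x) * (y ⬝ᵥ M *ᵥ y)) := Real.sqrt_le_sqrt h2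
    _ = _ := Real.sqrt_mul (hnn x) _
lemma dot_le_of_posDef {n : Type*} [Fintype n] [DecidableEq n] {A : Matrix n n ℝ}
    (hA : A.PosDef) (v Δ : n → ℝ) :
    |v ⬝ᵥ Δ| ≤ Real.sqrt (v ⬝ᵥ A⁻¹ *ᵥ v) * Real.sqrt (Δ ⬝ᵥ A *ᵥ Δ) := by
  have hAinv : A⁻¹.PosDef := hA.inv
  have hinv : A * A⁻¹ = 1 := Matrix.mul_nonsing_inv A (isUnit_iff_ne_zero.mpr hA.det_pos.ne')
  set x := A⁻¹ *ᵥ v with hx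
  have h1 : x ⬝ᵥ A *ᵥ Δ = v ⬝ᵥ Δ := by
    rw [symm_dot hA.1 x Δ, hx, mulVec_mulVec, hinv, one_mulVec, dotProduct_comm]
  have h2 : x ⬝ᵥ A *ᵥ x = v ⬝ᵥ A⁻¹ *ᵥ v := by
    rw [hx, mulVec_mulVec, hinv, one_mulVec]
    exact dotProduct_comm _ _
  calc |v ⬝ᵥ Δ| = |x ⬝ᵥ A *ᵥ Δ| := by rw [h1]
    _ ≤ Real.sqrt (x ⬝ᵥ A *ᵥ x) * Real.sqrt (Δ ⬝ᵥ A *ᵥ Δ) := cs_psd hA.posSemidef x Δ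
    _ = _ := by rw [h2]

theorem stmt15 {ι : Type*} (d : ℕ) (S : Finset ι) (hS : S.Nonempty)
    (H : ℝ) (V : ι → ℝ) (hV : ∀ s ∈ S, 0 ≤ V s ∧ V s ≤ H)
    (φ : ι → Fin d → ℝ) (p : ι → (Fin d → ℝ) → ℝ)
    (hp : ∀ s θ, p s θ = Real.exp (φ s ⬝ᵥ θ) / ∑ s' ∈ S, Real.exp (φ s' ⬝ᵥ θ))
    (A : Matrix (Fin d) (Fin d) ℝ) (hA : A.PosDef)
    (θ₁ θ₂ : Fin d → ℝ) :
    |(∑ s ∈ S, p s θ₁ * V s) - ∑ s ∈ S, p s θ₂ * V s| ≤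
      H * (S.sup' hS fun s => Real.sqrt (φ s ⬝ᵥ A⁻¹ *ᵥ φ s)) *
        Real.sqrt ((θ₁ - θ₂) ⬝ᵥ A *ᵥ (θ₁ - θ₂)) := by
  obtain ⟨s₀, hs₀⟩ := hS
  have hH : 0 ≤ H := le_trans (hV s₀ hs₀).1 (hV s₀ hs₀).2
  set Δ : Fin d → ℝ := θ₁ - θ₂ with hΔ
  set a : ι → ℝ := fun s => φ s ⬝ᵥ θ₂ with ha
  set b : ι → ℝ := fun s => φ s ⬝ᵥ Δ with hb
  set E : ι → ℝ → ℝ := fun s t => Real.exp (a s + t * b s) with hE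
  set N : ℝ → ℝ := fun t => ∑ s ∈ S, V s * E s t with hN
  set D : ℝ → ℝ := fun t => ∑ s ∈ S, E s t with hD
  have hDpos : ∀ t, 0 < D t := fun t =>
    Finset.sum_pos (fun s _ => Real.exp_pos _) ⟨s₀, hs₀⟩
  set g : ℝ → ℝ := fun t => N t / D t with hg
  -- endpoints
  have hdot1 : ∀ s, φ s ⬝ᵥ θ₁ = a s + 1 * b s := by
    intro s; simp only [ha, hb, hΔ, dotProduct_sub, one_mul]; ring
  have hdot0 : ∀ s, φ s ⬝ᵥ θ₂ = a s + 0 * b s := by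
    intro s; simp only [ha]; ring
  have hend : ∀ (t : ℝ) (θ : Fin d → ℝ), (∀ s, φ s ⬝ᵥ θ = a s + t * b s) →
      (∑ s ∈ S, p s θ * V s) = g t := by
    intro t θ hθ
    have hgt : g t = (∑ s ∈ S, V s * E s t) / (∑ s ∈ S, E s t) := rfl
    rw [hgt, Finset.sum_div]
    refine Finset.sum_congr rfl fun s _ => ?_
    rw [hp, hθ s]
    have : ∀ s', s' ∈ S → Real.exp (φ s' ⬝ᵥ θ) = E s' t := fun s' _ => by
      rw [hθ s', hE]
    rw [Finset.sum_congr rfl this, hE]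
    ring
  -- derivatives
  set N' : ℝ → ℝ := fun t => ∑ s ∈ S, V s * (b s * E s t) with hN'
  set D' : ℝ → ℝ := fun t => ∑ s ∈ S, b s * E s t with hD'
  have hEd : ∀ s t, HasDerivAt (fun t => E s t) (b s * E s t) t := by
    intro s t
    have h1 : HasDerivAt (fun t : ℝ => a s + t * b s) (b s) t := by
      simpa using ((hasDerivAt_id t).mul_const (b s)).const_add (a s)
    simpa [hE, mul_comm] using h1.exp
  have hNd : ∀ t, HasDerivAt N (N' t) t := fun t =>
    HasDerivAt.fun_sum fun s _ => ((hEd s t).const_mul (V s))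
  have hDd : ∀ t, HasDerivAt D (D' t) t := fun t =>
    HasDerivAt.fun_sum fun s _ => hEd s t
  set g' : ℝ → ℝ := fun t => (N' t * D t - N t * D' t) / (D t) ^ 2 with hg'
  have hgd : ∀ t, HasDerivAt g (g' t) t := fun t =>
    (hNd t).div (hDd t) (hDpos t).ne'
  -- the bound
  set M : ℝ := S.sup' ⟨s₀, hs₀⟩ fun s => Real.sqrt (φ s ⬝ᵥ A⁻¹ *ᵥ φ s) with hM
  set C : ℝ := H * M * Real.sqrt (Δ ⬝ᵥ A *ᵥ Δ) with hC
  have hbbound : ∀ s ∈ S, |b s| ≤ M * Real.sqrt (Δ ⬝ᵥ A *ᵥ Δ) := by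
    intro s hs
    refine le_trans (dot_le_of_posDef hA (φ s) Δ) ?_
    exact mul_le_mul_of_nonneg_right (Finset.le_sup' (fun s => Real.sqrt (φ s ⬝ᵥ A⁻¹ *ᵥ φ s)) hs) (Real.sqrt_nonneg _)
  have hbound : ∀ t, |g' t| ≤ C := by
    intro t
    have key : N' t * D t - N t * D' t =
        ∑ s ∈ S, ∑ s' ∈ S, E s t * E s' t * (b s * (V s - V s')) := by
      rw [hN', hD', hN, hD, Finset.sum_mul_sum, Finset.sum_mul_sum]
      rw [Finset.sum_comm (s := S) (t := S) (f := fun s s' => V s * E s t * (b s' * E s' t))]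
      rw [← Finset.sum_sub_distrib]
      refine Finset.sum_congr rfl fun s _ => ?_
      rw [← Finset.sum_sub_distrib]
      exact Finset.sum_congr rfl fun s' _ => by ring
    have habs : |N' t * D t - N t * D' t| ≤ (M * Real.sqrt (Δ ⬝ᵥ A *ᵥ Δ) * H) * (D t)^2 := by
      rw [key]
      calc |∑ s ∈ S, ∑ s' ∈ S, E s t * E s' t * (b s * (V s - V s'))|
          ≤ ∑ s ∈ S, ∑ s' ∈ S, |E s t * E s' t * (b s * (V s - V s'))| := by
            exact (Finset.abs_sum_le_sum_abs _ _).trans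
              (Finset.sum_le_sum fun s _ => Finset.abs_sum_le_sum_abs _ _)
        _ ≤ ∑ s ∈ S, ∑ s' ∈ S, E s t * E s' t * (M * Real.sqrt (Δ ⬝ᵥ A *ᵥ Δ) * H) := by
            refine Finset.sum_le_sum fun s hs => Finset.sum_le_sum fun s' hs' => ?_
            rw [abs_mul, abs_of_pos (mul_pos (Real.exp_pos _) (Real.exp_pos _))]
            refine mul_le_mul_of_nonneg_left ?_
              (le_of_lt (mul_pos (Real.exp_pos _) (Real.exp_pos _)))
            rw [abs_mul]
            have hVs : |V s - V s'| ≤ H := by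
              rw [abs_sub_le_iff]
              constructor <;> linarith [(hV s hs).1, (hV s hs).2, (hV s' hs').1, (hV s' hs').2]
            exact mul_le_mul (hbbound s hs) hVs (abs_nonneg _)
              (le_trans (abs_nonneg _) (hbbound s hs))
        _ = (M * Real.sqrt (Δ ⬝ᵥ A *ᵥ Δ) * H) * (D t)^2 := by
            rw [hD, sq, Finset.sum_mul_sum]
            rw [Finset.mul_sum]
            refine Finset.sum_congr rfl fun s _ => ?_
            rw [Finset.mul_sum]
            exact Finset.sum_congr rfl fun s' _ => by ring
    rw [hg', abs_div, abs_of_pos (pow_pos (hDpos t) 2), div_le_iff₀ (pow_pos (hDpos t) 2)]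
    calc |N' t * D t - N t * D' t| ≤ (M * Real.sqrt (Δ ⬝ᵥ A *ᵥ Δ) * H) * (D t)^2 := habs
      _ = C * (D t)^2 := by rw [hC]; ring
  -- mean value inequality
  have hmvt := Convex.norm_image_sub_le_of_norm_hasDerivWithin_le
    (f := g) (f' := g') (C := C) (s := Set.univ)
    (fun x _ => (hgd x).hasDerivWithinAt) (fun x _ => hbound x)
    convex_univ (Set.mem_univ (0 : ℝ)) (Set.mem_univ (1 : ℝ))
  have : |g 1 - g 0| ≤ C := by
    simpa [Real.norm_eq_abs] using hmvt
  rw [hend 1 θ₁ hdot1, hend 0 θ₂ hdot0]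
  calc |g 1 - g 0| ≤ C := this
    _ = H * M * Real.sqrt ((θ₁ - θ₂) ⬝ᵥ A *ᵥ (θ₁ - θ₂)) := by rw [hC, hΔ]
end

section
/- Let λ ≥ L² > 0 and suppose for each i = 1, …, n we are given a finite nonempty set S_i and vectors φ_{i,s} ∈ R^d for s ∈ S_i with ‖φ_{i,s}‖₂ ≤ L, and |S_i| ≤ U for all i. Define A_1 = λ I_d and A_{i+1} = A_i + ∑_{s∈S_i} φ_{i,s} φ_{i,s}^T. Then ∑_{i=1}^n max_{s∈S_i} ‖φ_{i,s}‖²_{A_i^{-1}} ≤ 2 log( det(A_{n+1}) / λ^d ) ≤ 2 d log(1 + nU L² / (dλ)). -/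
open Matrix Finset

variable {d : ℕ}

lemma psd_vmv (v : Fin d → ℝ) : (vecMulVec v v).PosSemidef := by
  refine Matrix.PosSemidef.of_dotProduct_mulVec_nonneg ?_ ?_
  · ext i j
    simp [vecMulVec_apply, IsHermitian, conjTranspose_apply, mul_comm]
  · intro x
    have : dotProduct (star x) (vecMulVec v v *ᵥ x) = (v ⬝ᵥ x) * (v ⬝ᵥ x) := by
      simp only [star_trivial, dotProduct, mulVec, vecMulVec_apply]
      simp only [Finset.mul_sum, Finset.sum_mul]
      rw [Finset.sum_comm]
      congr 1; ext i; congr 1; ext j; ring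
    rw [this]
    exact mul_self_nonneg _

lemma psd_sum {ι : Type*} (T : Finset ι) (v : ι → Fin d → ℝ) :
    (∑ s ∈ T, vecMulVec (v s) (v s)).PosSemidef := by
  classical
  induction T using Finset.induction_on with
  | empty => simpa using Matrix.PosSemidef.zero
  | insert _ _ h ih => rw [Finset.sum_insert h]; exact (psd_vmv _).add ih

lemma quad_nonneg {Q : Matrix (Fin d) (Fin d) ℝ} (hQ : Q.PosSemidef) (x : Fin d → ℝ) :
    0 ≤ x ⬝ᵥ Q *ᵥ x := by simpa using hQ.dotProduct_mulVec_nonneg x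
lemma det_rank1 {Q : Matrix (Fin d) (Fin d) ℝ} (hQ : Q.PosDef) (v : Fin d → ℝ) :
    (Q + vecMulVec v v).det = Q.det * (1 + v ⬝ᵥ Q⁻¹ *ᵥ v) := by
  rw [vecMulVec_eq Unit, det_add_replicateCol_mul_replicateRow hQ.det_pos.ne'.isUnit]
  congr 1
  rw [det_unique, Matrix.add_apply, Matrix.one_apply_eq]
  congr 1
  simp only [Matrix.mul_apply, Matrix.replicateRow_apply, Matrix.replicateCol_apply, dotProduct, mulVec,
    Finset.mul_sum, Finset.sum_mul]
  rw [Finset.sum_comm]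
  refine Finset.sum_congr rfl fun i _ => Finset.sum_congr rfl fun j _ => by ring

lemma det_mono {ι : Type*} {Q : Matrix (Fin d) (Fin d) ℝ} (hQ : Q.PosDef)
    (T : Finset ι) (v : ι → Fin d → ℝ) :
    Q.det ≤ (Q + ∑ s ∈ T, vecMulVec (v s) (v s)).det := by
  classical
  induction T using Finset.induction_on with
  | empty => simp
  | @insert a T ha ih =>
    have hQT : (Q + ∑ s ∈ T, vecMulVec (v s) (v s)).PosDef := hQ.add_posSemidef (psd_sum T v)
    rw [Finset.sum_insert ha, ← add_assoc, add_right_comm, det_rank1 hQT]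
    have h1 : 0 ≤ v a ⬝ᵥ (Q + ∑ s ∈ T, vecMulVec (v s) (v s))⁻¹ *ᵥ v a :=
      quad_nonneg hQT.inv.posSemidef _
    nlinarith [hQT.det_pos, ih]

lemma quad_inv_le {lam L : ℝ} (hL : 0 < L) (hlam : 0 < lam)
    {Q : Matrix (Fin d) (Fin d) ℝ} (hQ : Q.PosDef)
    (hQl : (Q - lam • (1 : Matrix (Fin d) (Fin d) ℝ)).PosSemidef)
    {x : Fin d → ℝ} (hx : Real.sqrt (x ⬝ᵥ x) ≤ L) :
    x ⬝ᵥ Q⁻¹ *ᵥ x ≤ L ^ 2 / lam := by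
  set y := Q⁻¹ *ᵥ x with hy
  have hQy : Q *ᵥ y = x := by
    rw [hy, mulVec_mulVec, Matrix.mul_nonsing_inv _ hQ.det_pos.ne'.isUnit, one_mulVec]
  have hxx : x ⬝ᵥ x ≤ L ^ 2 := by
    have h0 : 0 ≤ x ⬝ᵥ x := Finset.sum_nonneg fun i _ => mul_self_nonneg _
    nlinarith [Real.sq_sqrt h0, Real.sqrt_nonneg (x ⬝ᵥ x)]
  have ht : x ⬝ᵥ y = y ⬝ᵥ Q *ᵥ y := by rw [hQy, dotProduct_comm]
  have hlow : lam * (y ⬝ᵥ y) ≤ y ⬝ᵥ Q *ᵥ y := by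
    have := quad_nonneg hQl y
    rw [sub_mulVec, dotProduct_sub, smul_mulVec, one_mulVec, dotProduct_smul] at this
    simpa [smul_eq_mul] using this
  have hcs : (x ⬝ᵥ y) ^ 2 ≤ (x ⬝ᵥ x) * (y ⬝ᵥ y) := by
    simpa [dotProduct, pow_two] using Finset.sum_mul_sq_le_sq_mul_sq Finset.univ x y
  have hyy : 0 ≤ y ⬝ᵥ y := Finset.sum_nonneg fun i _ => mul_self_nonneg _
  rcases le_or_gt (x ⬝ᵥ y) 0 with h | h
  · calc x ⬝ᵥ y ≤ 0 := h
      _ ≤ L ^ 2 / lam := by positivity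
  · rw [ht] at h ⊢
    rw [div_eq_inv_mul, le_inv_mul_iff₀ hlam]
    have h1 : (y ⬝ᵥ Q *ᵥ y) ^ 2 ≤ L ^ 2 * (y ⬝ᵥ y) := by
      rw [← ht]
      calc (x ⬝ᵥ y) ^ 2 ≤ (x ⬝ᵥ x) * (y ⬝ᵥ y) := hcs
        _ ≤ L ^ 2 * (y ⬝ᵥ y) := mul_le_mul_of_nonneg_right hxx hyy
    have h2 : lam * (y ⬝ᵥ Q *ᵥ y) ^ 2 ≤ L ^ 2 * (y ⬝ᵥ Q *ᵥ y) := by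
      nlinarith [mul_le_mul_of_nonneg_left h1 hlam.le, mul_le_mul_of_nonneg_left hlow (sq_nonneg L)]
    nlinarith [h2, h, mul_pos h h]

lemma trace_eig {M : Matrix (Fin d) (Fin d) ℝ} (hM : M.IsHermitian) :
    M.trace = ∑ i, hM.eigenvalues i := by
  conv_lhs => rw [hM.spectral_theorem, Unitary.conjStarAlgAut_apply]
  rw [Matrix.trace_mul_comm, ← Matrix.mul_assoc,
    (Matrix.mem_unitaryGroup_iff').mp (hM.eigenvectorUnitary).2, Matrix.one_mul,
    Matrix.trace_diagonal]
  simp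

lemma det_le_trace_pow {M : Matrix (Fin d) (Fin d) ℝ} (hd : 0 < d) (hM : M.PosSemidef) :
    M.det ≤ (M.trace / d) ^ d := by
  have he := Matrix.IsHermitian.det_eq_prod_eigenvalues hM.1
  have hnn : ∀ i ∈ Finset.univ, (0:ℝ) ≤ hM.1.eigenvalues i := fun i _ => hM.eigenvalues_nonneg i
  have amgm := Real.geom_mean_le_arith_mean_weighted Finset.univ (fun _ => (d:ℝ)⁻¹)
    hM.1.eigenvalues (fun i _ => by positivity)
    (by simp [Finset.card_univ]; field_simp) hnn
  have hprodpow : (∏ i, hM.1.eigenvalues i ^ ((d:ℝ)⁻¹)) ^ d = ∏ i, hM.1.eigenvalues i := by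
    rw [← Finset.prod_pow]
    refine Finset.prod_congr rfl fun i _ => ?_
    rw [← Real.rpow_natCast (hM.1.eigenvalues i ^ ((d:ℝ)⁻¹)) d,
      ← Real.rpow_mul (hnn i (Finset.mem_univ i)),
      inv_mul_cancel₀ (by positivity : (d:ℝ) ≠ 0), Real.rpow_one]
  have hsum : ∑ i, (d:ℝ)⁻¹ * hM.1.eigenvalues i = M.trace / d := by
    rw [trace_eig hM.1, ← Finset.mul_sum, div_eq_inv_mul]
  simp only [RCLike.ofReal_real_eq_id, id_eq] at he
  rw [he, ← hprodpow]
  calc (∏ i, hM.1.eigenvalues i ^ ((d:ℝ)⁻¹)) ^ d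
      ≤ (∑ i, (d:ℝ)⁻¹ * hM.1.eigenvalues i) ^ d := by
        refine pow_le_pow_left₀ (Finset.prod_nonneg fun i _ => ?_) amgm d
        exact Real.rpow_nonneg (hnn i (Finset.mem_univ i)) _
    _ = (M.trace / d) ^ d := by rw [hsum]

lemma trace_nonneg' {M : Matrix (Fin d) (Fin d) ℝ} (hM : M.PosSemidef) : 0 ≤ M.trace := by
  rw [trace_eig hM.1]
  exact Finset.sum_nonneg fun i _ => hM.eigenvalues_nonneg i

lemma two_log_aux {z : ℝ} (h0 : 0 ≤ z) (h1 : z ≤ 1) : z ≤ 2 * Real.log (1 + z) := by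
  have hz : (0:ℝ) < 1 + z := by linarith
  have := Real.log_le_sub_one_of_pos (x := (1+z)⁻¹) (by positivity)
  rw [Real.log_inv] at this
  have hinv : (1+z)⁻¹ ≤ 1 - z/2 := by
    rw [inv_le_iff_one_le_mul₀ hz]
    nlinarith
  nlinarith
theorem stmt19 {ι : Type*} (d n : ℕ) (hd : 0 < d) (U : ℕ)
    (lam L : ℝ) (hL : 0 < L) (hlam : L ^ 2 ≤ lam)
    (S : Fin n → Finset ι) (hSne : ∀ i, (S i).Nonempty) (hSU : ∀ i, (S i).card ≤ U)
    (φ : Fin n → ι → Fin d → ℝ)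
    (hφ : ∀ i, ∀ s ∈ S i, Real.sqrt (φ i s ⬝ᵥ φ i s) ≤ L)
    (A : ℕ → Matrix (Fin d) (Fin d) ℝ)
    (hA0 : A 0 = lam • (1 : Matrix (Fin d) (Fin d) ℝ))
    (hAs : ∀ i : Fin n, A (i + 1) = A i + ∑ s ∈ S i, vecMulVec (φ i s) (φ i s)) :
    (∑ i : Fin n, (S i).sup' (hSne i) fun s => φ i s ⬝ᵥ (A i)⁻¹ *ᵥ φ i s) ≤
        2 * Real.log ((A n).det / lam ^ d) ∧
      2 * Real.log ((A n).det / lam ^ d) ≤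
        2 * d * Real.log (1 + n * U * L ^ 2 / (d * lam)) := by
  classical
  have hL2 : (0:ℝ) < L ^ 2 := by positivity
  have hlam0 : (0:ℝ) < lam := lt_of_lt_of_le hL2 hlam
  have hdR : (0:ℝ) < (d:ℝ) := by exact_mod_cast hd
  have hPD1 : (lam • (1 : Matrix (Fin d) (Fin d) ℝ)).PosDef := by
    rw [smul_one_eq_diagonal]
    exact posDef_diagonal_iff.mpr fun i => hlam0
  have hPSD : ∀ k : ℕ, k ≤ n →
      (A k - lam • (1 : Matrix (Fin d) (Fin d) ℝ)).PosSemidef := by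
    intro k
    induction k with
    | zero => intro _; rw [hA0]; simpa using Matrix.PosSemidef.zero
    | succ k ih =>
      intro hk
      have hkn : k < n := hk
      have heq := hAs ⟨k, hkn⟩
      have hre : A (k+1) - lam • (1 : Matrix (Fin d) (Fin d) ℝ) =
          (A k - lam • (1 : Matrix (Fin d) (Fin d) ℝ)) +
            ∑ s ∈ S ⟨k, hkn⟩, vecMulVec (φ ⟨k, hkn⟩ s) (φ ⟨k, hkn⟩ s) := by
        rw [heq]; abel
      rw [hre]
      exact (ih hkn.le).add (psd_sum _ _)
  have hPDA : ∀ k : ℕ, k ≤ n → (A k).PosDef := by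
    intro k hk
    have : A k = lam • (1 : Matrix (Fin d) (Fin d) ℝ) +
        (A k - lam • (1 : Matrix (Fin d) (Fin d) ℝ)) := by abel
    rw [this]
    exact hPD1.add_posSemidef (hPSD k hk)
  have hφ2 : ∀ (i : Fin n), ∀ s ∈ S i, φ i s ⬝ᵥ φ i s ≤ L ^ 2 := by
    intro i s hs
    have h0 : 0 ≤ φ i s ⬝ᵥ φ i s := Finset.sum_nonneg fun j _ => mul_self_nonneg _
    nlinarith [Real.sq_sqrt h0, hφ i s hs, Real.sqrt_nonneg (φ i s ⬝ᵥ φ i s)]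
  set m : Fin n → ℝ := fun i => (S i).sup' (hSne i) fun s => φ i s ⬝ᵥ (A i)⁻¹ *ᵥ φ i s
    with hmdef
  have hm0 : ∀ i : Fin n, 0 ≤ m i := by
    intro i
    obtain ⟨s0, hs0⟩ := hSne i
    exact le_trans (quad_nonneg (hPDA i i.isLt.le).inv.posSemidef (φ i s0))
      (Finset.le_sup' (fun s => φ i s ⬝ᵥ (A (i:ℕ))⁻¹ *ᵥ φ i s) hs0)
  have hm1 : ∀ i : Fin n, m i ≤ 1 := by
    intro i
    refine Finset.sup'_le _ _ fun s hs => ?_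
    refine le_trans (quad_inv_le hL hlam0 (hPDA i i.isLt.le) (hPSD i i.isLt.le) (hφ i s hs)) ?_
    rw [div_le_one hlam0]
    exact hlam
  have hstep : ∀ i : Fin n, (A i).det * (1 + m i) ≤ (A (i + 1)).det := by
    intro i
    obtain ⟨t, ht, hts⟩ := Finset.exists_mem_eq_sup' (hSne i)
      (fun s => φ i s ⬝ᵥ (A i)⁻¹ *ᵥ φ i s)
    have hPDi := hPDA i i.isLt.le
    have hre : A i + ∑ s ∈ S i, vecMulVec (φ i s) (φ i s) =
        (A i + vecMulVec (φ i t) (φ i t)) +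
          ∑ s ∈ (S i).erase t, vecMulVec (φ i s) (φ i s) := by
      rw [← Finset.sum_erase_add _ _ ht]; abel
    rw [hAs i, hre]
    have hQt : (A i + vecMulVec (φ i t) (φ i t)).PosDef := hPDi.add_posSemidef (psd_vmv _)
    calc (A i).det * (1 + m i)
        = (A i + vecMulVec (φ i t) (φ i t)).det := by
          rw [det_rank1 hPDi,
            show m i = φ i t ⬝ᵥ (A (i:ℕ))⁻¹ *ᵥ φ i t from hts]
      _ ≤ _ := det_mono hQt _ _
  set g : ℕ → ℝ := fun j => if h : j < n then 1 + m ⟨j, h⟩ else 1 with hgdef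
  have hgk : ∀ (k : ℕ) (hk : k < n), g k = 1 + m ⟨k, hk⟩ := by
    intro k hk; simp only [hgdef]; exact dif_pos hk
  have hg1 : ∀ j, (1:ℝ) ≤ g j := by
    intro j
    by_cases h : j < n
    · rw [hgk j h]; linarith [hm0 ⟨j, h⟩]
    · simp only [hgdef]; rw [dif_neg h]
  have htel : ∀ k : ℕ, k ≤ n → lam ^ d * ∏ j ∈ Finset.range k, g j ≤ (A k).det := by
    intro k
    induction k with
    | zero =>
      intro _
      simp [hA0, Matrix.det_smul]
    | succ k ih =>
      intro hk
      have hkn : k < n := hk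
      have h1 := hstep ⟨k, hkn⟩
      have h2 := ih hkn.le
      have hg0 : (0:ℝ) ≤ g k := le_trans zero_le_one (hg1 k)
      rw [Finset.prod_range_succ, ← mul_assoc]
      calc lam ^ d * (∏ j ∈ Finset.range k, g j) * g k
          ≤ (A k).det * g k := mul_le_mul_of_nonneg_right h2 hg0
        _ = (A k).det * (1 + m ⟨k, hkn⟩) := by rw [hgk k hkn]
        _ ≤ (A (k + 1)).det := h1
  have hdetpos : 0 < (A n).det := (hPDA n le_rfl).det_pos
  have hlamd : (0:ℝ) < lam ^ d := by positivity
  have hprod_pos : 0 < ∏ i : Fin n, (1 + m i) :=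
    Finset.prod_pos fun i _ => by linarith [hm0 i]
  have hfin : ∏ i : Fin n, (1 + m i) = ∏ j ∈ Finset.range n, g j := by
    rw [← Fin.prod_univ_eq_prod_range g n]
    exact Finset.prod_congr rfl fun i _ => (hgk i i.isLt).symm
  have hPle : ∏ i : Fin n, (1 + m i) ≤ (A n).det / lam ^ d := by
    rw [le_div_iff₀ hlamd, hfin, mul_comm]
    exact htel n le_rfl
  constructor
  · calc (∑ i : Fin n, m i)
        ≤ ∑ i : Fin n, 2 * Real.log (1 + m i) :=
          Finset.sum_le_sum fun i _ => two_log_aux (hm0 i) (hm1 i)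
      _ = 2 * Real.log (∏ i : Fin n, (1 + m i)) := by
          rw [← Finset.mul_sum, Real.log_prod fun i _ => (by linarith [hm0 i] : (0:ℝ) < 1 + m i).ne']
      _ ≤ 2 * Real.log ((A n).det / lam ^ d) := by
          have := Real.log_le_log hprod_pos hPle
          linarith
  · have hAnpsd := (hPDA n le_rfl).posSemidef
    have htr0 : 0 ≤ (A n).trace := trace_nonneg' hAnpsd
    have htrb : ∀ k : ℕ, k ≤ n → (A k).trace ≤ d * lam + k * (U * L ^ 2) := by
      intro k
      induction k with
      | zero =>
        intro _
        rw [hA0, Matrix.trace_smul, Matrix.trace_one]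
        simp [smul_eq_mul, mul_comm]
      | succ k ih =>
        intro hk
        have hkn : k < n := hk
        rw [hAs ⟨k, hkn⟩, Matrix.trace_add, Matrix.trace_sum]
        have hsum : ∑ s ∈ S ⟨k, hkn⟩, (vecMulVec (φ ⟨k, hkn⟩ s) (φ ⟨k, hkn⟩ s)).trace
            ≤ (U : ℝ) * L ^ 2 := by
          have h1 : ∀ s ∈ S ⟨k, hkn⟩,
              (vecMulVec (φ ⟨k, hkn⟩ s) (φ ⟨k, hkn⟩ s)).trace ≤ L ^ 2 := by
            intro s hs
            have : (vecMulVec (φ ⟨k, hkn⟩ s) (φ ⟨k, hkn⟩ s)).trace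
                = φ ⟨k, hkn⟩ s ⬝ᵥ φ ⟨k, hkn⟩ s := by
              simp [Matrix.trace, Matrix.diag, vecMulVec_apply, dotProduct]
            rw [this]
            exact hφ2 _ s hs
          calc ∑ s ∈ S ⟨k, hkn⟩, (vecMulVec (φ ⟨k, hkn⟩ s) (φ ⟨k, hkn⟩ s)).trace
              ≤ (S ⟨k, hkn⟩).card • (L ^ 2) := Finset.sum_le_card_nsmul _ _ _ h1
            _ = ((S ⟨k, hkn⟩).card : ℝ) * L ^ 2 := by rw [nsmul_eq_mul]
            _ ≤ (U : ℝ) * L ^ 2 := by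
                have := hSU ⟨k, hkn⟩
                have : ((S ⟨k, hkn⟩).card : ℝ) ≤ (U : ℝ) := by exact_mod_cast this
                nlinarith
        have h2 := ih hkn.le
        push_cast
        push_cast at h2
        linarith
    have htr := htrb n le_rfl
    set c : ℝ := ((d : ℝ) * lam + n * (U * L ^ 2)) / d with hcdef
    have hc0 : 0 < c := by
      rw [hcdef]
      have : (0:ℝ) ≤ (n:ℝ) * (U * L ^ 2) := by positivity
      positivity
    have hdet_le : (A n).det ≤ c ^ d := by
      refine le_trans (det_le_trace_pow hd hAnpsd) ?_
      refine pow_le_pow_left₀ (by positivity) ?_ d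
      rw [hcdef]
      gcongr
    have hceq : 1 + (n:ℝ) * U * L ^ 2 / ((d:ℝ) * lam) = c / lam := by
      rw [hcdef]; field_simp
    rw [hceq]
    have h1 : Real.log ((A n).det / lam ^ d) ≤ Real.log ((c / lam) ^ d) := by
      rw [div_pow]
      exact Real.log_le_log (by positivity) (by gcongr)
    rw [Real.log_pow] at h1
    linarith
end
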